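/- Let Ω be the set of triplets (x, y, z) with x ≤ y ≤ z in [−π/3, π/3) such that 2x − y + 3z ≥ 0 and (π/(3√3)) (2 tan x − tan y + 3 tan z) ≥ 2x − y + 3z. Then for every (x, y, z) ∈ Ω one has tan((2x − y + 3z)/4) ≤ (2 tan x − tan y + 3 tan z)/4. -/

import Mathlib

open Real

lemma tan_convexOn : ConvexOn ℝ (Set.Icc 0 (π / 3)) Real.tan := by
  have hsub : Set.Icc (0:ℝ) (π / 3) ⊆ Set.Ioo (-(π/2)) (π/2) := by
    intro t ht
    constructor
    · linarith [ht.1, Real.pi_pos]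
    · linarith [ht.2, Real.pi_pos]
  apply MonotoneOn.convexOn_of_deriv (convex_Icc _ _)
  · exact fun t ht => (Real.continuousAt_tan.2 (Real.cos_pos_of_mem_Ioo (hsub ht)).ne').continuousWithinAt
  · intro t ht
    rw [interior_Icc] at ht
    exact (Real.differentiableAt_tan.2 (Real.cos_pos_of_mem_Ioo (hsub (Set.Ioo_subset_Icc_self ht))).ne').differentiableWithinAt
  · intro a ha b hb hab
    rw [interior_Icc] at ha hb
    rw [Real.deriv_tan, Real.deriv_tan]
    have hca : 0 < Real.cos a := Real.cos_pos_of_mem_Ioo (hsub (Set.Ioo_subset_Icc_self ha))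
    have hcb : 0 < Real.cos b := Real.cos_pos_of_mem_Ioo (hsub (Set.Ioo_subset_Icc_self hb))
    have hle : Real.cos b ≤ Real.cos a := by
      apply Real.cos_le_cos_of_nonneg_of_le_pi ha.1.le _ hab
      linarith [hb.2, Real.pi_pos]
    have : Real.cos b ^ 2 ≤ Real.cos a ^ 2 := by nlinarith
    have h2 : (0:ℝ) < Real.cos b ^ 2 := by positivity
    rw [div_le_div_iff₀ (by positivity) h2]
    linarith

lemma tan_chord {t : ℝ} (h0 : 0 ≤ t) (h1 : t ≤ π / 3) :
    Real.tan t ≤ 3 * Real.sqrt 3 / π * t := by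
  have hπ : (0:ℝ) < π := Real.pi_pos
  set b : ℝ := 3 * t / π with hb
  have hb0 : 0 ≤ b := by positivity
  have hb1 : b ≤ 1 := by rw [hb, div_le_one hπ]; linarith
  have key := tan_convexOn.2 (Set.mem_Icc.2 ⟨le_refl 0, by positivity⟩)
    (Set.mem_Icc.2 ⟨by positivity, le_refl _⟩) (by linarith : (0:ℝ) ≤ 1 - b) hb0
    (by ring : (1 - b) + b = 1)
  have ht : (1 - b) • (0:ℝ) + b • (π / 3) = t := by
    simp only [smul_eq_mul, hb]; field_simp; ring
  rw [ht, Real.tan_zero, Real.tan_pi_div_three, smul_eq_mul, smul_eq_mul,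
    mul_zero, zero_add] at key
  have hbe : b * Real.sqrt 3 = 3 * Real.sqrt 3 / π * t := by
    rw [hb]; field_simp [hπ.ne']
  linarith [key, hbe.le]

theorem tan_weighted_jensen
    (x y z : ℝ) (hxy : x ≤ y) (hyz : y ≤ z)
    (hx : x ∈ Set.Ico (-(π / 3)) (π / 3))
    (hy : y ∈ Set.Ico (-(π / 3)) (π / 3))
    (hz : z ∈ Set.Ico (-(π / 3)) (π / 3))
    (hpos : 0 ≤ 2 * x - y + 3 * z)
    (hconstraint : 2 * x - y + 3 * z ≤
      π / (3 * Real.sqrt 3) * (2 * tan x - tan y + 3 * tan z)) :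
    tan ((2 * x - y + 3 * z) / 4) ≤ (2 * tan x - tan y + 3 * tan z) / 4 := by
  have hπ : (0:ℝ) < π := Real.pi_pos
  have hs3 : (0:ℝ) < Real.sqrt 3 := Real.sqrt_pos.2 (by norm_num)
  set s := 2 * x - y + 3 * z with hs
  have hsub : s / 4 ≤ π / 3 := by
    have : s ≤ 4 * z := by linarith
    have := hz.2
    linarith
  have h1 : tan (s / 4) ≤ 3 * Real.sqrt 3 / π * (s / 4) :=
    tan_chord (by linarith) hsub
  have h2 : 3 * Real.sqrt 3 / π * (s / 4) ≤ (2 * tan x - tan y + 3 * tan z) / 4 := by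
    rw [div_mul_eq_mul_div, div_le_div_iff₀ hπ (by norm_num : (0:ℝ) < 4)]
    have hc := hconstraint
    rw [div_mul_eq_mul_div, le_div_iff₀ (by positivity : (0:ℝ) < 3 * Real.sqrt 3)] at hc
    nlinarith [hc]
  linarith
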